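/- In the decoupling setting (see context), assume moreover that q is not a root of unity (qⁿ ≠ 1 for all n ≥ 1). (i) If for all Q⁻ ∈ ℒ₁⁻, all Q⁺ ∈ ℒ₁⁺ and all integers n ≥ 0 one has qⁿ·Q⁻ ≠ Q⁺, then h₁ has no pole at any point of ℂ ∖ {0}. (ii) If for all Q⁻ ∈ ℒ₂⁻, all Q⁺ ∈ ℒ₂⁺ and all integers n ≥ 0 one has qⁿ·Q⁻ ≠ Q⁺, then h₂ has no pole at any point of ℂ ∖ {0}. -/

import Mathlib

/-!
Statement 13: in the decoupling setting, with q not a root of unity, if no point of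
ℒ₁⁻ reaches a point of ℒ₁⁺ under forward iteration of multiplication by q, then h₁
has no pole in ℂ ∖ {0}; likewise for ℒ₂⁻, ℒ₂⁺ and h₂.
-/

noncomputable section

/-- `a` is a pole of the rational function `h`. -/
def IsPole (h : RatFunc ℂ) (a : ℂ) : Prop := h.denom.eval a = 0

/-- `a` is a zero of the rational function `h`. -/
def IsZero (h : RatFunc ℂ) (a : ℂ) : Prop := h.num.eval a = 0

open Polynomial

def Reg (h : RatFunc ℂ) (a : ℂ) : Prop :=
  ∃ p r : ℂ[X], r.eval a ≠ 0 ∧ h = algebraMap ℂ[X] (RatFunc ℂ) p / algebraMap ℂ[X] (RatFunc ℂ) r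

lemma not_isPole_iff {h : RatFunc ℂ} {a : ℂ} : ¬ IsPole h a ↔ Reg h a := by
  constructor
  · intro hp
    exact ⟨h.num, h.denom, hp, (RatFunc.num_div_denom h).symm⟩
  · rintro ⟨p, r, hr, rfl⟩
    intro hpole
    have hr0 : r ≠ 0 := fun h => hr (by simp [h])
    have hdvd : (algebraMap ℂ[X] (RatFunc ℂ) p / algebraMap ℂ[X] (RatFunc ℂ) r).denom ∣ r :=
      (RatFunc.denom_dvd hr0).mpr ⟨p, rfl⟩
    have : (X - C a) ∣ r := dvd_trans (dvd_iff_isRoot.mpr hpole) hdvd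
    exact hr (eval_eq_zero_of_dvd_of_eval_eq_zero this (by simp) : r.eval a = 0)

lemma Reg.add {f g : RatFunc ℂ} {a : ℂ} (hf : Reg f a) (hg : Reg g a) : Reg (f + g) a := by
  obtain ⟨p₁, r₁, h₁, rfl⟩ := hf
  obtain ⟨p₂, r₂, h₂, rfl⟩ := hg
  refine ⟨p₁ * r₂ + p₂ * r₁, r₁ * r₂, by simp [h₁, h₂], ?_⟩
  have hr₁ : algebraMap ℂ[X] (RatFunc ℂ) r₁ ≠ 0 :=
    RatFunc.algebraMap_ne_zero (fun h => h₁ (by simp [h]))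
  have hr₂ : algebraMap ℂ[X] (RatFunc ℂ) r₂ ≠ 0 :=
    RatFunc.algebraMap_ne_zero (fun h => h₂ (by simp [h]))
  field_simp
  simp only [map_mul, map_add]
  ring

lemma Reg.mul {f g : RatFunc ℂ} {a : ℂ} (hf : Reg f a) (hg : Reg g a) : Reg (f * g) a := by
  obtain ⟨p₁, r₁, h₁, rfl⟩ := hf
  obtain ⟨p₂, r₂, h₂, rfl⟩ := hg
  refine ⟨p₁ * p₂, r₁ * r₂, by simp [h₁, h₂], ?_⟩
  rw [map_mul, map_mul, div_mul_div_comm]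

lemma Reg.neg {f : RatFunc ℂ} {a : ℂ} (hf : Reg f a) : Reg (-f) a := by
  obtain ⟨p, r, h, rfl⟩ := hf
  exact ⟨-p, r, h, by rw [map_neg]; exact (neg_div _ _).symm⟩

lemma Reg.C (c : ℂ) (a : ℂ) : Reg (RatFunc.C c) a :=
  ⟨Polynomial.C c, 1, by simp, by simp [RatFunc.algebraMap_C]⟩

lemma Reg.inv {g : RatFunc ℂ} {a : ℂ} (hn : ¬ IsZero g a) : Reg g⁻¹ a := by
  refine ⟨g.denom, g.num, hn, ?_⟩
  rw [← RatFunc.num_div_denom g, inv_div, RatFunc.num_div_denom g]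

lemma aeval_X_eq (p : ℂ[X]) : aeval (RatFunc.X) p = algebraMap ℂ[X] (RatFunc ℂ) p := by
  have : (aeval (RatFunc.X) : ℂ[X] →ₐ[ℂ] RatFunc ℂ) = IsScalarTower.toAlgHom ℂ ℂ[X] (RatFunc ℂ) :=
    Polynomial.algHom_ext (by simp)
  exact congrFun (congrArg DFunLike.coe this) p

lemma aeval_inv_eq (p : ℂ[X]) :
    aeval (RatFunc.X⁻¹) p = algebraMap ℂ[X] (RatFunc ℂ) p.reverse
      / algebraMap ℂ[X] (RatFunc ℂ) (Polynomial.X ^ p.natDegree) := by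
  have hX : (RatFunc.X : RatFunc ℂ)⁻¹ ≠ 0 := inv_ne_zero RatFunc.X_ne_zero
  letI : Invertible (RatFunc.X⁻¹ : RatFunc ℂ) := invertibleOfNonzero hX
  have h := Polynomial.eval₂_reverse_mul_pow (algebraMap ℂ (RatFunc ℂ)) (RatFunc.X⁻¹) p
  rw [invOf_eq_inv, inv_inv, ← Polynomial.aeval_def, ← Polynomial.aeval_def, aeval_X_eq] at h
  rw [← h, map_pow, RatFunc.algebraMap_X, inv_pow, div_eq_mul_inv]

lemma eval_reverse_ne_zero {r : ℂ[X]} {a : ℂ} (ha : a ≠ 0) (h : r.eval a⁻¹ ≠ 0) :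
    r.reverse.eval a ≠ 0 := by
  letI : Invertible (a⁻¹ : ℂ) := invertibleOfNonzero (inv_ne_zero ha)
  have := Polynomial.eval₂_reverse_eq_zero_iff (RingHom.id ℂ) (a⁻¹) r
  rw [invOf_eq_inv, inv_inv] at this
  exact fun hc => h (this.mp hc)

lemma Reg.iota {h : RatFunc ℂ} {a c : ℂ} (hc : c ≠ 0) (ha : a ≠ 0)
    (ι : RatFunc ℂ ≃ₐ[ℂ] RatFunc ℂ) (hι : ι RatFunc.X = RatFunc.C c * RatFunc.X⁻¹)
    (hreg : Reg h (c * a⁻¹)) : Reg (ι h) a := by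
  obtain ⟨p, r, hr, rfl⟩ := hreg
  set p' := p.comp (Polynomial.C c * Polynomial.X) with hp'def
  set r' := r.comp (Polynomial.C c * Polynomial.X) with hr'def
  have key : ∀ f : ℂ[X], ι (algebraMap ℂ[X] (RatFunc ℂ) f)
      = aeval (RatFunc.X⁻¹) (f.comp (Polynomial.C c * Polynomial.X)) := by
    intro f
    rw [← aeval_X_eq f, ← Polynomial.aeval_algHom_apply ι, hι, Polynomial.aeval_comp, map_mul,
      Polynomial.aeval_C, Polynomial.aeval_X, RatFunc.algebraMap_eq_C]
  have hrc : r'.eval (a⁻¹) ≠ 0 := by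
    rw [hr'def, Polynomial.eval_comp, Polynomial.eval_mul, Polynomial.eval_C, Polynomial.eval_X]
    exact hr
  have hrev : r'.reverse.eval a ≠ 0 := eval_reverse_ne_zero ha hrc
  refine ⟨p'.reverse * Polynomial.X ^ r'.natDegree, r'.reverse * Polynomial.X ^ p'.natDegree,
    by simp [hrev, ha], ?_⟩
  rw [map_div₀, key p, key r, ← hp'def, ← hr'def, aeval_inv_eq, aeval_inv_eq,
    map_mul, map_mul, map_pow, map_pow]
  have h1 : algebraMap ℂ[X] (RatFunc ℂ) r'.reverse ≠ 0 :=
    RatFunc.algebraMap_ne_zero (fun hz => hrev (by simp [hz]))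
  have h2 : (RatFunc.X : RatFunc ℂ) ≠ 0 := RatFunc.X_ne_zero
  rw [RatFunc.algebraMap_X, div_div_div_comm, div_div_eq_mul_div, div_mul_eq_mul_div, div_div]

lemma chain_exit {S L : Set ℂ} (hfin : S.Finite) {q : ℂ} (hq : q ≠ 0)
    (hroot : ∀ n : ℕ, 1 ≤ n → q ^ n ≠ 1)
    (hstep : ∀ b ∈ S, b ∈ L ∨ q * b ∈ S) {a : ℂ} (ha : a ∈ S) (ha0 : a ≠ 0) :
    ∃ n : ℕ, q ^ n * a ∈ L := by
  by_contra hcon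
  push_neg at hcon
  have hmem : ∀ n : ℕ, q ^ n * a ∈ S := by
    intro n
    induction n with
    | zero => simpa using ha
    | succ n ih =>
      rcases hstep _ ih with h | h
      · exact absurd h (hcon n)
      · have he : q ^ (n + 1) * a = q * (q ^ n * a) := by ring
        rwa [he]
  have hkey : ∀ n m : ℕ, n < m → q ^ n ≠ q ^ m := by
    intro n m h hEq
    apply hroot (m - n) (by omega)
    have h2 : q ^ n * q ^ (m - n) = q ^ n * 1 := by
      rw [mul_one, ← pow_add, hEq]
      congr 1
      omega
    exact mul_left_cancel₀ (pow_ne_zero n hq) h2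
  have hinj : Function.Injective (fun n : ℕ => q ^ n * a) := by
    intro n m hnm
    simp only at hnm
    have h1 : q ^ n = q ^ m := mul_right_cancel₀ ha0 hnm
    rcases lt_trichotomy n m with h | h | h
    · exact absurd h1 (hkey n m h)
    · exact h
    · exact absurd h1.symm (hkey m n h)
  exact hfin.not_infinite (Set.infinite_of_injective_forall_mem hinj hmem)

theorem statement13 (q : ℂ) (hq : q ≠ 0) (hroot : ∀ n : ℕ, 1 ≤ n → q ^ n ≠ 1)
    (ι₁ ι₂ : RatFunc ℂ ≃ₐ[ℂ] RatFunc ℂ)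
    (hι₁ : ι₁ RatFunc.X = RatFunc.X⁻¹)
    (hι₂ : ι₂ RatFunc.X = RatFunc.C q * RatFunc.X⁻¹)
    (γ₁ γ₂ : RatFunc ℂ) (hγ₁ : γ₁ ≠ 0) (hγ₂ : γ₂ ≠ 0) (ω : ℂ)
    (P₁ P₂ P₃ P₄ : ℂ) (hP₁ : P₁ ≠ 0) (hP₂ : P₂ ≠ 0) (hP₃ : P₃ ≠ 0) (hP₄ : P₄ ≠ 0)
    (hz₁ : ∀ a : ℂ, a ≠ 0 → IsZero γ₁ a → a = P₁ ∨ a = P₂)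
    (hz₂ : ∀ a : ℂ, a ≠ 0 → IsZero γ₂ a → a = P₃ ∨ a = P₄)
    (hp₁ : ∀ a : ℂ, a ≠ 0 → ¬ IsPole γ₁ a)
    (hp₂ : ∀ a : ℂ, a ≠ 0 → ¬ IsPole γ₂ a)
    (h₁ h₂ : RatFunc ℂ)
    (hrel : γ₁ * h₁ + γ₂ * h₂ + RatFunc.C ω = 0)
    (hs₁ : ι₁ h₁ = h₁) (hs₂ : ι₂ h₂ = h₂) :
    ((∀ Qm ∈ ({P₁, P₂, q / P₃, q / P₄} : Set ℂ),
        ∀ Qp ∈ ({P₁⁻¹, P₂⁻¹, P₃ / q, P₄ / q} : Set ℂ),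
          ∀ n : ℕ, q ^ n * Qm ≠ Qp) →
      ∀ P : ℂ, P ≠ 0 → ¬ IsPole h₁ P) ∧
    ((∀ Qm ∈ ({q * P₁, q * P₂, q / P₃, q / P₄} : Set ℂ),
        ∀ Qp ∈ ({P₁⁻¹, P₂⁻¹, P₃, P₄} : Set ℂ),
          ∀ n : ℕ, q ^ n * Qm ≠ Qp) →
      ∀ P : ℂ, P ≠ 0 → ¬ IsPole h₂ P) := by
  -- transfer lemmas
  have T1 : ∀ a : ℂ, a ≠ 0 → IsPole h₁ a → IsPole h₂ a ∨ a = P₁ ∨ a = P₂ := by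
    intro a ha hpole
    by_contra hcon
    push_neg at hcon
    obtain ⟨hnp2, hne1, hne2⟩ := hcon
    have hz : ¬ IsZero γ₁ a := fun hz => by
      rcases hz₁ a ha hz with h | h
      · exact hne1 h
      · exact hne2 h
    have hh1 : h₁ = -(γ₂ * h₂ + RatFunc.C ω) / γ₁ := by
      rw [eq_div_iff hγ₁]
      linear_combination hrel
    have hreg : Reg h₁ a := by
      rw [hh1, div_eq_mul_inv]
      exact (((not_isPole_iff.mp (hp₂ a ha)).mul (not_isPole_iff.mp hnp2)).add
        (Reg.C ω a)).neg.mul (Reg.inv hz)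
    exact (not_isPole_iff.mpr hreg) hpole
  have T2 : ∀ a : ℂ, a ≠ 0 → IsPole h₂ a → IsPole h₁ a ∨ a = P₃ ∨ a = P₄ := by
    intro a ha hpole
    by_contra hcon
    push_neg at hcon
    obtain ⟨hnp1, hne1, hne2⟩ := hcon
    have hz : ¬ IsZero γ₂ a := fun hz => by
      rcases hz₂ a ha hz with h | h
      · exact hne1 h
      · exact hne2 h
    have hh2 : h₂ = -(γ₁ * h₁ + RatFunc.C ω) / γ₂ := by
      rw [eq_div_iff hγ₂]
      linear_combination hrel
    have hreg : Reg h₂ a := by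
      rw [hh2, div_eq_mul_inv]
      exact (((not_isPole_iff.mp (hp₁ a ha)).mul (not_isPole_iff.mp hnp1)).add
        (Reg.C ω a)).neg.mul (Reg.inv hz)
    exact (not_isPole_iff.mpr hreg) hpole
  have Sym1 : ∀ a : ℂ, a ≠ 0 → IsPole h₁ a → IsPole h₁ a⁻¹ := by
    intro a ha hpole
    by_contra hnp
    have hreg : Reg h₁ ((1 : ℂ) * a⁻¹) := by rw [one_mul]; exact not_isPole_iff.mp hnp
    have : Reg (ι₁ h₁) a :=
      Reg.iota one_ne_zero ha ι₁ (by rw [hι₁, map_one, one_mul]) hreg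
    rw [hs₁] at this
    exact (not_isPole_iff.mpr this) hpole
  have Sym2 : ∀ a : ℂ, a ≠ 0 → IsPole h₂ a → IsPole h₂ (q * a⁻¹) := by
    intro a ha hpole
    by_contra hnp
    have hreg : Reg h₂ (q * a⁻¹) := not_isPole_iff.mp hnp
    have : Reg (ι₂ h₂) a := Reg.iota hq ha ι₂ hι₂ hreg
    rw [hs₂] at this
    exact (not_isPole_iff.mpr this) hpole
  constructor
  · -- part (i)
    intro hyp P hP hpole
    have hfin : ({b : ℂ | b ≠ 0 ∧ IsPole h₁ b}).Finite :=
      (Polynomial.finite_setOf_isRoot (RatFunc.denom_ne_zero h₁)).subset (fun b hb => hb.2)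
    have hF : ∀ b ∈ ({b : ℂ | b ≠ 0 ∧ IsPole h₁ b}),
        b ∈ ({P₁⁻¹, P₂⁻¹, P₃ / q, P₄ / q} : Set ℂ) ∨ q * b ∈ ({b : ℂ | b ≠ 0 ∧ IsPole h₁ b}) := by
      rintro b ⟨hb0, hbp⟩
      have h1 : IsPole h₁ b⁻¹ := Sym1 b hb0 hbp
      rcases T1 b⁻¹ (inv_ne_zero hb0) h1 with hp2 | hcase
      · have h2 : IsPole h₂ (q * (b⁻¹)⁻¹) := Sym2 _ (inv_ne_zero hb0) hp2
        rw [inv_inv] at h2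
        have hqb : q * b ≠ 0 := mul_ne_zero hq hb0
        rcases T2 (q * b) hqb h2 with hp1 | h34
        · exact Or.inr ⟨hqb, hp1⟩
        · left
          rcases h34 with h | h
          · have : b = P₃ / q := by rw [eq_div_iff hq, mul_comm]; exact h
            simp [this]
          · have : b = P₄ / q := by rw [eq_div_iff hq, mul_comm]; exact h
            simp [this]
      · left
        rcases hcase with h | h
        · have : b = P₁⁻¹ := by rw [← h, inv_inv]
          simp [this]
        · have : b = P₂⁻¹ := by rw [← h, inv_inv]
          simp [this]
    have hB : ∀ b ∈ ({b : ℂ | b ≠ 0 ∧ IsPole h₁ b}),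
        b ∈ ({P₁, P₂, q / P₃, q / P₄} : Set ℂ) ∨ q⁻¹ * b ∈ ({b : ℂ | b ≠ 0 ∧ IsPole h₁ b}) := by
      rintro b ⟨hb0, hbp⟩
      rcases T1 b hb0 hbp with hp2 | h12
      · have h2 : IsPole h₂ (q * b⁻¹) := Sym2 b hb0 hp2
        have hqb : q * b⁻¹ ≠ 0 := mul_ne_zero hq (inv_ne_zero hb0)
        rcases T2 _ hqb h2 with hp1 | h34
        · have h1 : IsPole h₁ ((q * b⁻¹)⁻¹) := Sym1 _ hqb hp1
          have he : (q * b⁻¹)⁻¹ = q⁻¹ * b := by rw [mul_inv, inv_inv]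
          rw [he] at h1
          exact Or.inr ⟨mul_ne_zero (inv_ne_zero hq) hb0, h1⟩
        · left
          rcases h34 with h | h
          · have : b = q / P₃ := by
              rw [eq_div_iff hP₃, ← h]
              field_simp
            simp [this]
          · have : b = q / P₄ := by
              rw [eq_div_iff hP₄, ← h]
              field_simp
            simp [this]
      · left
        rcases h12 with h | h
        · simp [h]
        · simp [h]
    obtain ⟨n, hn⟩ := chain_exit hfin hq hroot hF ⟨hP, hpole⟩ hP
    have hroot' : ∀ k : ℕ, 1 ≤ k → (q⁻¹) ^ k ≠ 1 := by
      intro k hk hcon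
      exact hroot k hk (by rw [← inv_inv (q ^ k), ← inv_pow, hcon, inv_one])
    obtain ⟨m, hm⟩ := chain_exit hfin (inv_ne_zero hq) hroot' hB ⟨hP, hpole⟩ hP
    refine hyp _ hm _ hn (n + m) ?_
    rw [inv_pow, pow_add]
    field_simp
  · -- part (ii)
    intro hyp P hP hpole
    have hfin : ({b : ℂ | b ≠ 0 ∧ IsPole h₂ b}).Finite :=
      (Polynomial.finite_setOf_isRoot (RatFunc.denom_ne_zero h₂)).subset (fun b hb => hb.2)
    have hF : ∀ b ∈ ({b : ℂ | b ≠ 0 ∧ IsPole h₂ b}),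
        b ∈ ({P₁⁻¹, P₂⁻¹, P₃, P₄} : Set ℂ) ∨ q * b ∈ ({b : ℂ | b ≠ 0 ∧ IsPole h₂ b}) := by
      rintro b ⟨hb0, hbp⟩
      rcases T2 b hb0 hbp with hp1 | h34
      · have h1 : IsPole h₁ b⁻¹ := Sym1 b hb0 hp1
        rcases T1 b⁻¹ (inv_ne_zero hb0) h1 with hp2 | h12
        · have h2 : IsPole h₂ (q * (b⁻¹)⁻¹) := Sym2 _ (inv_ne_zero hb0) hp2
          rw [inv_inv] at h2
          exact Or.inr ⟨mul_ne_zero hq hb0, h2⟩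
        · left
          rcases h12 with h | h
          · have : b = P₁⁻¹ := by rw [← h, inv_inv]
            simp [this]
          · have : b = P₂⁻¹ := by rw [← h, inv_inv]
            simp [this]
      · left
        rcases h34 with h | h
        · simp [h]
        · simp [h]
    have hB : ∀ b ∈ ({b : ℂ | b ≠ 0 ∧ IsPole h₂ b}),
        b ∈ ({q * P₁, q * P₂, q / P₃, q / P₄} : Set ℂ) ∨
          q⁻¹ * b ∈ ({b : ℂ | b ≠ 0 ∧ IsPole h₂ b}) := by
      rintro b ⟨hb0, hbp⟩
      have h2 : IsPole h₂ (q * b⁻¹) := Sym2 b hb0 hbp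
      have hqb : q * b⁻¹ ≠ 0 := mul_ne_zero hq (inv_ne_zero hb0)
      rcases T2 _ hqb h2 with hp1 | h34
      · have h1 : IsPole h₁ ((q * b⁻¹)⁻¹) := Sym1 _ hqb hp1
        have he : (q * b⁻¹)⁻¹ = q⁻¹ * b := by rw [mul_inv, inv_inv]
        rw [he] at h1
        have hqib : q⁻¹ * b ≠ 0 := mul_ne_zero (inv_ne_zero hq) hb0
        rcases T1 _ hqib h1 with hp2 | h12
        · exact Or.inr ⟨hqib, hp2⟩
        · left
          rcases h12 with h | h
          · have : b = q * P₁ := by rw [← h]; field_simp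
            simp [this]
          · have : b = q * P₂ := by rw [← h]; field_simp
            simp [this]
      · left
        rcases h34 with h | h
        · have : b = q / P₃ := by
            rw [eq_div_iff hP₃, ← h]
            field_simp
          simp [this]
        · have : b = q / P₄ := by
            rw [eq_div_iff hP₄, ← h]
            field_simp
          simp [this]
    obtain ⟨n, hn⟩ := chain_exit hfin hq hroot hF ⟨hP, hpole⟩ hP
    have hroot' : ∀ k : ℕ, 1 ≤ k → (q⁻¹) ^ k ≠ 1 := by
      intro k hk hcon
      exact hroot k hk (by rw [← inv_inv (q ^ k), ← inv_pow, hcon, inv_one])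
    obtain ⟨m, hm⟩ := chain_exit hfin (inv_ne_zero hq) hroot' hB ⟨hP, hpole⟩ hP
    refine hyp _ hm _ hn (n + m) ?_
    rw [inv_pow, pow_add]
    field_simp
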